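/- Let p, m be coprime with 1 < p < m, with Euclidean data k_i, p_i, B_i as usual (k_s := p_{s-1}). Let u ≤ h ≤ s and integers 0 ≤ α_i ≤ k_i with α_h > 0, and set y = Σ_{i=u}^h (-1)^i α_i B_i. Then y > 0 if and only if h is even. -/

import Mathlib

theorem alternating_sum_B_pos_iff_even
    (p m s : ℕ) (k P B : ℕ → ℕ)
    (hcop : Nat.Coprime p m) (hp : 1 < p) (hpm : p < m) (hs : 1 ≤ s)
    (hP0 : P 0 = p)
    (hm : m = k 0 * P 0 + P 1)
    (hrec : ∀ i, 1 ≤ i → i ≤ s - 1 → P (i - 1) = k i * P i + P (i + 1))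
    (hdec : ∀ i, 1 ≤ i → i ≤ s → P i < P (i - 1))
    (hPs : P s = 1)
    (hks : k s = P (s - 1))
    (hB0 : B 0 = 1) (hB1 : B 1 = k 0)
    (hBrec : ∀ i, 1 ≤ i → i ≤ s - 1 → B (i + 1) = B (i - 1) + k i * B i)
    (u h : ℕ) (huh : u ≤ h) (hhs : h ≤ s)
    (α : ℕ → ℕ) (hαk : ∀ i ∈ Finset.Icc u h, α i ≤ k i) (hαh : 0 < α h) :
    0 < ∑ i ∈ Finset.Icc u h, (-1 : ℤ) ^ i * (α i : ℤ) * (B i : ℤ) ↔ Even h := by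
  -- k 0 ≥ 1
  have hP1 : P 1 < P 0 := hdec 1 le_rfl hs
  have hk0 : 1 ≤ k 0 := by
    rcases Nat.eq_zero_or_pos (k 0) with hk | hk
    · rw [hk] at hm; omega
    · exact hk
  -- positivity of B
  have hBpos : ∀ i, i ≤ s → 1 ≤ B i := by
    intro i
    induction i using Nat.strong_induction_on with
    | _ i ih =>
      intro his
      match i with
      | 0 => omega
      | 1 => rw [hB1]; exact hk0
      | (j+2) =>
        have hrecj := hBrec (j+1) (by omega) (by omega)
        have e1 : j + 1 - 1 = j := by omega
        have e2 : j + 1 + 1 = j + 2 := by omega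
        rw [e1, e2] at hrecj
        have hj := ih j (by omega) (by omega)
        omega
  set S : ℕ → ℤ := fun v => ∑ i ∈ Finset.Icc u v, (-1 : ℤ) ^ i * (α i : ℤ) * (B i : ℤ)
    with hS
  -- main invariant for v < h
  have key : ∀ v, u ≤ v → v + 1 ≤ h →
      (Even v → (-(B v : ℤ) < S v ∧ S v ≤ (B (v+1) : ℤ))) ∧
      (¬ Even v → (-(B (v+1) : ℤ) < S v ∧ S v ≤ (B v : ℤ))) := by
    intro v huv
    induction v, huv using Nat.le_induction with
    | base =>
      intro huh1
      have hSu : S u = (-1 : ℤ) ^ u * (α u : ℤ) * (B u : ℤ) := by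
        simp only [hS, Finset.Icc_self, Finset.sum_singleton]
      have hBu : 1 ≤ B u := hBpos u (by omega)
      have hαu : α u ≤ k u := hαk u (by simp [Finset.mem_Icc]; omega)
      have hprod : (α u : ℤ) * (B u : ℤ) ≤ (k u : ℤ) * (B u : ℤ) :=
        mul_le_mul_of_nonneg_right (by exact_mod_cast hαu) (by positivity)
      constructor
      · intro hev
        rw [hSu, hev.neg_one_pow, one_mul]
        constructor
        · have : (0:ℤ) ≤ (α u : ℤ) * (B u : ℤ) := by positivity
          have : (1:ℤ) ≤ (B u : ℤ) := by exact_mod_cast hBu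
          linarith
        · rcases Nat.eq_zero_or_pos u with hu0 | hu0
          · subst hu0
            have : (B 1 : ℤ) = (k 0 : ℤ) := by exact_mod_cast hB1
            have hB0' : (B 0 : ℤ) = 1 := by exact_mod_cast hB0
            rw [hB0'] at hprod ⊢
            linarith
          · have hrecu := hBrec u (by omega) (by omega)
            have hBu1 : 1 ≤ B (u-1) := hBpos (u-1) (by omega)
            have : (B (u+1) : ℤ) = (B (u-1) : ℤ) + (k u : ℤ) * (B u : ℤ) := by
              exact_mod_cast hrecu
            have : (1:ℤ) ≤ (B (u-1) : ℤ) := by exact_mod_cast hBu1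
            linarith
      · intro hodd
        have hu0 : 1 ≤ u := by
          rcases Nat.eq_zero_or_pos u with h0 | h0
          · exfalso; exact hodd (by simp [h0])
          · exact h0
        have hpow : (-1 : ℤ) ^ u = -1 := (Nat.not_even_iff_odd.mp hodd).neg_one_pow
        rw [hSu, hpow]
        have hrecu := hBrec u (by omega) (by omega)
        have hBu1 : 1 ≤ B (u-1) := hBpos (u-1) (by omega)
        have hcast : (B (u+1) : ℤ) = (B (u-1) : ℤ) + (k u : ℤ) * (B u : ℤ) := by
          exact_mod_cast hrecu
        have h1 : (1:ℤ) ≤ (B (u-1) : ℤ) := by exact_mod_cast hBu1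
        have h2 : (0:ℤ) ≤ (α u : ℤ) * (B u : ℤ) := by positivity
        have h3 : (0:ℤ) ≤ (B u : ℤ) := by positivity
        constructor
        · linarith
        · linarith
    | succ v hv ih =>
      intro hvh
      obtain ⟨h1, h2⟩ := ih (by omega)
      have hSstep : S (v+1) = S v + (-1 : ℤ) ^ (v+1) * (α (v+1) : ℤ) * (B (v+1) : ℤ) := by
        simp only [hS]
        exact Finset.sum_Icc_succ_top (by omega) _
      have hα : α (v+1) ≤ k (v+1) := hαk (v+1) (by simp [Finset.mem_Icc]; omega)
      have hprod : (α (v+1) : ℤ) * (B (v+1) : ℤ) ≤ (k (v+1) : ℤ) * (B (v+1) : ℤ) :=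
        mul_le_mul_of_nonneg_right (by exact_mod_cast hα) (by positivity)
      have hprod0 : (0:ℤ) ≤ (α (v+1) : ℤ) * (B (v+1) : ℤ) := by positivity
      have hrecv := hBrec (v+1) (by omega) (by omega)
      simp only [Nat.add_sub_cancel] at hrecv
      have hcast : (B (v+2) : ℤ) = (B v : ℤ) + (k (v+1) : ℤ) * (B (v+1) : ℤ) := by
        exact_mod_cast hrecv
      constructor
      · -- v+1 even, so v odd
        intro hev
        have hodd : ¬ Even v := by
          intro hv'
          exact (Nat.even_add_one.mp hev) hv'
        obtain ⟨hl, hr⟩ := h2 hodd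
        have hpow : (-1 : ℤ) ^ (v+1) = 1 := hev.neg_one_pow
        rw [hSstep, hpow, one_mul]
        constructor
        · linarith
        · linarith
      · -- v+1 odd, so v even
        intro hodd
        have hev : Even v := by
          by_contra hv'
          exact hodd (Nat.even_add_one.mpr hv')
        obtain ⟨hl, hr⟩ := h1 hev
        have hpow : (-1 : ℤ) ^ (v+1) = -1 := by
          have : Odd (v+1) := Even.add_one hev
          exact this.neg_one_pow
        rw [hSstep, hpow]
        constructor
        · linarith
        · linarith
  -- final step
  have hBh : 1 ≤ B h := hBpos h hhs
  have hαB : (B h : ℤ) ≤ (α h : ℤ) * (B h : ℤ) := by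
    have : (1:ℤ) ≤ (α h : ℤ) := by exact_mod_cast hαh
    nlinarith [show (0:ℤ) ≤ (B h : ℤ) from by positivity]
  have hBh' : (1:ℤ) ≤ (B h : ℤ) := by exact_mod_cast hBh
  rcases eq_or_lt_of_le huh with heq | hlt
  · subst heq
    have hSu : S u = (-1 : ℤ) ^ u * (α u : ℤ) * (B u : ℤ) := by
      simp only [hS, Finset.Icc_self, Finset.sum_singleton]
    rcases Nat.even_or_odd u with hev | hodd
    · simp only [hev, iff_true]
      show 0 < S u
      rw [hSu, hev.neg_one_pow, one_mul]
      linarith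
    · have hne : ¬ Even u := Nat.not_even_iff_odd.mpr hodd
      simp only [hne, iff_false, not_lt]
      show S u ≤ 0
      rw [hSu, hodd.neg_one_pow]
      linarith
  · have hSstep : S h = S (h-1) + (-1 : ℤ) ^ h * (α h : ℤ) * (B h : ℤ) := by
      obtain ⟨w, hw⟩ : ∃ w, h = w + 1 := ⟨h - 1, by omega⟩
      have hw1 : h - 1 = w := by omega
      rw [hw1, hw]
      simp only [hS]
      exact Finset.sum_Icc_succ_top (by omega) _
    obtain ⟨h1, h2⟩ := key (h-1) (by omega) (by omega)
    have hh1 : h - 1 + 1 = h := by omega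
    rcases Nat.even_or_odd h with hev | hodd
    · simp only [hev, iff_true]
      have hoddh1 : ¬ Even (h-1) := by
        rw [Nat.even_iff] at hev ⊢
        omega
      obtain ⟨hl, _⟩ := h2 hoddh1
      rw [hh1] at hl
      show 0 < S h
      rw [hSstep, hev.neg_one_pow, one_mul]
      linarith
    · have hne : ¬ Even h := Nat.not_even_iff_odd.mpr hodd
      simp only [hne, iff_false, not_lt]
      have hevh1 : Even (h-1) := by
        rw [Nat.odd_iff] at hodd
        rw [Nat.even_iff]
        omega
      obtain ⟨_, hr⟩ := h1 hevh1
      rw [hh1] at hr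
      show S h ≤ 0
      rw [hSstep, hodd.neg_one_pow]
      linarith
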